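/- For the CHAIN SCM X = U_X, W = U_W, Z = -0.5X + U_Z, Y = -W - 3ZX + U_Y with independent N(0,1) noises, under the policy consisting of the functional intervention Z = a·X (for a ∈ ℝ) together with do(W = 1), one has E[Y] = -1 - 3a. In particular for any a > 0 this expectation is strictly smaller than -1, the optimal value attainable by hard interventions on Z and W alone. -/

import Mathlib

open MeasureTheory ProbabilityTheory Real
open scoped ENNReal NNReal

section Stmt6Aux

lemma stmt6_pdf_eq (x : ℝ) :
    gaussianPDFReal 0 1 x = (√(2 * π))⁻¹ * rexp (-x ^ 2 / 2) := by
  simp [gaussianPDFReal]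

lemma stmt6_gauss_int (g : ℝ → ℝ) :
    ∫ x, g x ∂(gaussianReal 0 1) = ∫ x, gaussianPDFReal 0 1 x * g x := by
  rw [gaussianReal_of_var_ne_zero 0 one_ne_zero,
    show gaussianPDF 0 1 = fun x => ((gaussianPDFReal 0 1 x).toNNReal : ℝ≥0∞) from rfl,
    integral_withDensity_eq_integral_smul ((measurable_gaussianPDFReal 0 1).real_toNNReal)]
  congr 1
  ext x
  rw [NNReal.smul_def, Real.coe_toNNReal _ (gaussianPDFReal_nonneg 0 1 x), smul_eq_mul]

lemma stmt6_gauss_integrable (g : ℝ → ℝ)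
    (h : Integrable (fun x => gaussianPDFReal 0 1 x * g x)) :
    Integrable g (gaussianReal 0 1) := by
  rw [gaussianReal_of_var_ne_zero 0 one_ne_zero,
    show gaussianPDF 0 1 = fun x => ((gaussianPDFReal 0 1 x).toNNReal : ℝ≥0∞) from rfl,
    integrable_withDensity_iff_integrable_smul
      ((measurable_gaussianPDFReal 0 1).real_toNNReal)]
  have : (fun x => ((gaussianPDFReal 0 1 x).toNNReal : ℝ≥0) • g x)
      = fun x => gaussianPDFReal 0 1 x * g x := by
    ext x
    rw [NNReal.smul_def, Real.coe_toNNReal _ (gaussianPDFReal_nonneg 0 1 x), smul_eq_mul]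
  rw [this]
  exact h

lemma stmt6_integrable_sq_exp :
    Integrable (fun x : ℝ => x ^ 2 * rexp (-x ^ 2 / 2)) := by
  have h := integrable_rpow_mul_exp_neg_mul_sq (b := 1/2) (by norm_num) (s := 2) (by norm_num)
  have he : (fun x : ℝ => x ^ (2:ℝ) * rexp (-(1/2) * x ^ 2))
      = fun x : ℝ => x ^ 2 * rexp (-x ^ 2 / 2) := by
    ext x
    rw [Real.rpow_two]
    ring_nf
  rwa [he] at h

lemma stmt6_integrable_id_exp :
    Integrable (fun x : ℝ => x * rexp (-x ^ 2 / 2)) := by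
  have h := integrable_mul_exp_neg_mul_sq (b := 1/2) (by norm_num)
  have he : (fun x : ℝ => x * rexp (-(1/2) * x ^ 2))
      = fun x : ℝ => x * rexp (-x ^ 2 / 2) := by
    ext x
    ring_nf
  rwa [he] at h

lemma stmt6_int_sq_exp : ∫ x : ℝ, x ^ 2 * rexp (-x ^ 2 / 2) = √(2 * π) := by
  have key := integral_rpow_mul_exp_neg_mul_rpow (p := 2) (q := 2) (b := 1/2)
    (by norm_num) (by norm_num) (by norm_num)
  have hG : Real.Gamma ((2 + 1) / 2) = √π / 2 := by
    rw [show ((2:ℝ) + 1) / 2 = 1/2 + 1 by norm_num,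
      Real.Gamma_add_one (by norm_num), Real.Gamma_one_half_eq]
    ring
  have hb : ((1:ℝ)/2) ^ (-((2:ℝ) + 1) / 2) = 2 * √2 := by
    rw [one_div, show (-((2:ℝ) + 1) / 2) = -(3/2) by norm_num,
      Real.inv_rpow (by norm_num), ← Real.rpow_neg (by norm_num), neg_neg,
      show (3:ℝ)/2 = 1 + 1/2 by norm_num, Real.rpow_add (by norm_num),
      Real.rpow_one, ← Real.sqrt_eq_rpow]
  have hIoi : ∫ x in Set.Ioi (0:ℝ), x ^ 2 * rexp (-x ^ 2 / 2) = √(2 * π) / 2 := by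
    have he : ∀ x ∈ Set.Ioi (0:ℝ),
        x ^ (2:ℝ) * rexp (-(1/2) * x ^ (2:ℝ)) = x ^ 2 * rexp (-x ^ 2 / 2) := by
      intro x _
      rw [Real.rpow_two]
      ring_nf
    rw [← setIntegral_congr_fun measurableSet_Ioi he, key, hG, hb,
      Real.sqrt_mul (by norm_num) π]
    ring
  have hIic : ∫ x in Set.Iic (0:ℝ), x ^ 2 * rexp (-x ^ 2 / 2)
      = ∫ x in Set.Ioi (0:ℝ), x ^ 2 * rexp (-x ^ 2 / 2) := by
    rw [show Set.Iic (0:ℝ) = Set.Iic (-0 : ℝ) by norm_num,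
      ← integral_comp_neg_Ioi]
    simp [neg_sq]
  have := integral_add_compl (measurableSet_Iic (a := (0:ℝ)))
    stmt6_integrable_sq_exp
  rw [Set.compl_Iic] at this
  rw [← this, hIic, hIoi]
  ring

lemma stmt6_int_id_exp : ∫ x : ℝ, x * rexp (-x ^ 2 / 2) = 0 := by
  have h := integral_neg_eq_self (fun x : ℝ => x * rexp (-x ^ 2 / 2)) volume
  simp only [neg_sq] at h
  rw [show (fun x : ℝ => -x * rexp (-x ^ 2 / 2))
      = fun x : ℝ => -(x * rexp (-x ^ 2 / 2)) from funext fun x => by ring,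
    integral_neg] at h
  linarith

lemma stmt6_sqrt_ne : (√(2 * π)) ≠ 0 := by
  positivity

lemma stmt6_moment2 : ∫ x, x ^ 2 ∂(gaussianReal 0 1) = 1 := by
  rw [stmt6_gauss_int]
  simp only [stmt6_pdf_eq]
  rw [show (fun x : ℝ => (√(2 * π))⁻¹ * rexp (-x ^ 2 / 2) * x ^ 2)
      = fun x : ℝ => (√(2 * π))⁻¹ * (x ^ 2 * rexp (-x ^ 2 / 2)) from
      funext fun x => by ring, integral_const_mul, stmt6_int_sq_exp,
    inv_mul_cancel₀ stmt6_sqrt_ne]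

lemma stmt6_moment1 : ∫ x, x ∂(gaussianReal 0 1) = 0 := by
  rw [stmt6_gauss_int]
  simp only [stmt6_pdf_eq]
  rw [show (fun x : ℝ => (√(2 * π))⁻¹ * rexp (-x ^ 2 / 2) * x)
      = fun x : ℝ => (√(2 * π))⁻¹ * (x * rexp (-x ^ 2 / 2)) from
      funext fun x => by ring, integral_const_mul, stmt6_int_id_exp, mul_zero]

lemma stmt6_integrable_sq : Integrable (fun x : ℝ => x ^ 2) (gaussianReal 0 1) := by
  apply stmt6_gauss_integrable
  simp only [stmt6_pdf_eq]
  rw [show (fun x : ℝ => (√(2 * π))⁻¹ * rexp (-x ^ 2 / 2) * x ^ 2)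
      = fun x : ℝ => (√(2 * π))⁻¹ * (x ^ 2 * rexp (-x ^ 2 / 2)) from
      funext fun x => by ring]
  exact stmt6_integrable_sq_exp.const_mul _

lemma stmt6_integrable_id : Integrable (fun x : ℝ => x) (gaussianReal 0 1) := by
  apply stmt6_gauss_integrable
  simp only [stmt6_pdf_eq]
  rw [show (fun x : ℝ => (√(2 * π))⁻¹ * rexp (-x ^ 2 / 2) * x)
      = fun x : ℝ => (√(2 * π))⁻¹ * (x * rexp (-x ^ 2 / 2)) from
      funext fun x => by ring]
  exact stmt6_integrable_id_exp.const_mul _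

end Stmt6Aux

/-- For the CHAIN SCM, under the policy consisting of the functional
intervention Z = a·X together with do(W = 1), Y = -1 - 3aX² + U_Y and
E[Y] = -1 - 3a; for any a > 0 this is strictly smaller than -1, the optimal value
attainable by hard interventions on Z and W alone. -/
theorem stmt6 {Ω : Type*} [MeasurableSpace Ω] (P : Measure Ω) [IsProbabilityMeasure P]
    (UX UW UZ UY : Ω → ℝ)
    (hInd : iIndepFun ![UX, UW, UZ, UY] P)
    (hUX : P.map UX = gaussianReal 0 1)
    (hUW : P.map UW = gaussianReal 0 1)
    (hUZ : P.map UZ = gaussianReal 0 1)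
    (hUY : P.map UY = gaussianReal 0 1) :
    (∀ a : ℝ, ∫ ω, (-(1 : ℝ) - 3 * (a * UX ω) * UX ω + UY ω) ∂P = -1 - 3 * a) ∧
    (∀ a : ℝ, 0 < a →
        ∫ ω, (-(1 : ℝ) - 3 * (a * UX ω) * UX ω + UY ω) ∂P < -1) := by
  have hXm : AEMeasurable UX P :=
    aemeasurable_of_map_neZero (by rw [hUX]; exact ⟨IsProbabilityMeasure.ne_zero _⟩)
  have hYm : AEMeasurable UY P :=
    aemeasurable_of_map_neZero (by rw [hUY]; exact ⟨IsProbabilityMeasure.ne_zero _⟩)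
  have hIX2 : Integrable (fun ω => UX ω ^ 2) P := by
    have h : Integrable (fun x : ℝ => x ^ 2) (P.map UX) := by
      rw [hUX]; exact stmt6_integrable_sq
    exact (integrable_map_measure
      ((measurable_id.pow_const 2).aestronglyMeasurable) hXm).mp h
  have hIY : Integrable UY P := by
    have h : Integrable (fun x : ℝ => x) (P.map UY) := by
      rw [hUY]; exact stmt6_integrable_id
    exact (integrable_map_measure measurable_id.aestronglyMeasurable hYm).mp h
  have hEX2 : ∫ ω, UX ω ^ 2 ∂P = 1 := by
    have h := integral_map (f := fun x : ℝ => x ^ 2) hXm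
      ((measurable_id.pow_const 2).aestronglyMeasurable)
    rw [hUX, stmt6_moment2] at h
    exact h.symm
  have hEY : ∫ ω, UY ω ∂P = 0 := by
    have h := integral_map (f := fun x : ℝ => x) hYm
      measurable_id.aestronglyMeasurable
    rw [hUY, stmt6_moment1] at h
    exact h.symm
  have key : ∀ a : ℝ,
      ∫ ω, (-(1 : ℝ) - 3 * (a * UX ω) * UX ω + UY ω) ∂P = -1 - 3 * a := by
    intro a
    have hfe : ∀ x y : ℝ, -(1:ℝ) - 3 * (a * x) * x + y = (-1 + -(3 * a) * x ^ 2) + y :=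
      fun x y => by ring
    simp only [hfe]
    have h1 : Integrable (fun ω => -(1:ℝ) + -(3 * a) * UX ω ^ 2) P :=
      (integrable_const _).add (hIX2.const_mul _)
    have h2 : Integrable (fun ω => -(3 * a) * UX ω ^ 2) P := hIX2.const_mul _
    rw [integral_add h1 hIY, integral_add (integrable_const (-1 : ℝ)) h2,
      integral_const, integral_const_mul, hEX2, hEY]
    simp
    ring
  refine ⟨key, fun a ha => ?_⟩
  rw [key a]
  linarith
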